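/- Let A be an n×n real matrix with spectral radius at most 1 and ‖A‖₂ ≤ M, and let H be an n×r real matrix with ‖H‖₂ ≤ M, where r ≤ n. Define the controllability Gramian Γ_k(A,H) = Σ_{i=0}^{k-1} A^i H H' (A')^i. Then ‖Γ_k(A,H)‖₂ ≤ e^{2n-2} · k^{2n-1} · max{M^{2n}, 1}. -/

import Mathlib

open Matrix

/-- The spectral norm (ℓ² operator norm) of a real matrix. -/
noncomputable def specNorm {m n : Type*} [Fintype m] [Fintype n] [DecidableEq n]
    (A : Matrix m n ℝ) : ℝ :=
  ‖LinearMap.toContinuousLinearMap (Matrix.toEuclideanLin A)‖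

/-- The controllability Gramian `Γ_k(A,H) = Σ_{i=0}^{k-1} Aⁱ H Hᵀ (Aᵀ)ⁱ`. -/
noncomputable def gramian {n r : ℕ} (A : Matrix (Fin n) (Fin n) ℝ)
    (H : Matrix (Fin n) (Fin r) ℝ) (k : ℕ) : Matrix (Fin n) (Fin n) ℝ :=
  ∑ i ∈ Finset.range k, A ^ i * H * Hᵀ * (Aᵀ) ^ i



open Polynomial
open scoped Matrix.Norms.L2Operator


open Matrix
open scoped Matrix.Norms.L2Operator

variable {p q : ℕ}

lemma euclidean_norm_sq {m : Type*} [Fintype m] {𝕜 : Type*} [RCLike 𝕜]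
    (x : EuclideanSpace 𝕜 m) : ‖x‖ ^ 2 = ∑ i, ‖x i‖ ^ 2 := by
  rw [EuclideanSpace.norm_eq, Real.sq_sqrt]
  positivity

lemma clm_apply {𝕜 : Type*} [RCLike 𝕜] (B : Matrix (Fin p) (Fin q) 𝕜)
    (v : EuclideanSpace 𝕜 (Fin q)) (j : Fin p) :
    (LinearMap.toContinuousLinearMap (toEuclideanLin B)) v j
      = (B *ᵥ (fun i => v i)) j := rfl

lemma norm_sq_complex (c : ℂ) : ‖c‖ ^ 2 = c.re ^ 2 + c.im ^ 2 := by
  rw [Complex.sq_norm, Complex.normSq_apply]; ring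

lemma l2_norm_map_ofReal (A : Matrix (Fin p) (Fin q) ℝ) :
    ‖A.map (Complex.ofReal)‖ = ‖A‖ := by
  apply le_antisymm
  · rw [Matrix.l2_opNorm_def]
    apply ContinuousLinearMap.opNorm_le_bound _ (norm_nonneg A)
    intro z
    set L := LinearMap.toContinuousLinearMap (toEuclideanLin (A.map Complex.ofReal))
    set x : EuclideanSpace ℝ (Fin q) := (WithLp.equiv 2 _).symm (fun i => (z i).re) with hx
    set y : EuclideanSpace ℝ (Fin q) := (WithLp.equiv 2 _).symm (fun i => (z i).im) with hy
    have hre : ∀ j, (L z j).re = (A *ᵥ (fun i => x i)) j := by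
      intro j
      rw [clm_apply]
      simp [Matrix.mulVec, dotProduct, Matrix.map_apply, Complex.re_sum, hx,
        WithLp.equiv_symm_apply, PiLp.toLp_apply]
    have him : ∀ j, (L z j).im = (A *ᵥ (fun i => y i)) j := by
      intro j
      rw [clm_apply]
      simp [Matrix.mulVec, dotProduct, Matrix.map_apply, Complex.im_sum, hy,
        WithLp.equiv_symm_apply, PiLp.toLp_apply]
    have hz : ‖z‖ ^ 2 = ‖x‖ ^ 2 + ‖y‖ ^ 2 := by
      rw [euclidean_norm_sq, euclidean_norm_sq, euclidean_norm_sq, ← Finset.sum_add_distrib]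
      apply Finset.sum_congr rfl
      intro i _
      rw [norm_sq_complex]
      simp [hx, hy, Real.norm_eq_abs, sq_abs, WithLp.equiv_symm_apply, PiLp.toLp_apply]
    have hsq : ‖L z‖ ^ 2
        = ‖(EuclideanSpace.equiv (Fin p) ℝ).symm (A *ᵥ (fun i => x i))‖ ^ 2
          + ‖(EuclideanSpace.equiv (Fin p) ℝ).symm (A *ᵥ (fun i => y i))‖ ^ 2 := by
      rw [euclidean_norm_sq, euclidean_norm_sq, euclidean_norm_sq, ← Finset.sum_add_distrib]
      apply Finset.sum_congr rfl
      intro j _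
      rw [norm_sq_complex, hre j, him j]
      simp [Real.norm_eq_abs, sq_abs]
    have h1 : ‖(EuclideanSpace.equiv (Fin p) ℝ).symm (A *ᵥ (fun i => x i))‖ ≤ ‖A‖ * ‖x‖ :=
      A.l2_opNorm_mulVec x
    have h2 : ‖(EuclideanSpace.equiv (Fin p) ℝ).symm (A *ᵥ (fun i => y i))‖ ≤ ‖A‖ * ‖y‖ :=
      A.l2_opNorm_mulVec y
    have hfin : ‖L z‖ ^ 2 ≤ (‖A‖ * ‖z‖) ^ 2 := by
      rw [hsq]
      calc _ ≤ (‖A‖ * ‖x‖)^2 + (‖A‖ * ‖y‖)^2 :=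
            add_le_add (pow_le_pow_left₀ (norm_nonneg _) h1 2)
              (pow_le_pow_left₀ (norm_nonneg _) h2 2)
        _ = ‖A‖^2 * (‖x‖^2 + ‖y‖^2) := by ring
        _ = (‖A‖ * ‖z‖)^2 := by rw [← hz]; ring
    show ‖L z‖ ≤ ‖A‖ * ‖z‖
    calc ‖L z‖ = Real.sqrt (‖L z‖^2) := (Real.sqrt_sq (norm_nonneg _)).symm
      _ ≤ Real.sqrt ((‖A‖ * ‖z‖)^2) := Real.sqrt_le_sqrt hfin
      _ = ‖A‖ * ‖z‖ := Real.sqrt_sq (by positivity)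
  · rw [Matrix.l2_opNorm_def (A := A)]
    apply ContinuousLinearMap.opNorm_le_bound _ (norm_nonneg _)
    intro x
    set Ac := A.map (Complex.ofReal) with hAc
    set z : EuclideanSpace ℂ (Fin q) := (WithLp.equiv 2 _).symm (fun i => ((x i : ℝ) : ℂ)) with hz
    have hnz : ‖z‖ = ‖x‖ := by
      rw [EuclideanSpace.norm_eq, EuclideanSpace.norm_eq]
      congr 1
      apply Finset.sum_congr rfl
      intro i _
      simp [hz, WithLp.equiv_symm_apply, PiLp.toLp_apply, Complex.norm_real]
    set L := LinearMap.toContinuousLinearMap (toEuclideanLin A)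
    set Lc := LinearMap.toContinuousLinearMap (toEuclideanLin Ac)
    have hcomp : ∀ j, Lc z j = ((L x j : ℝ) : ℂ) := by
      intro j
      rw [clm_apply, clm_apply]
      simp [Matrix.mulVec, dotProduct, hAc, Matrix.map_apply, hz, WithLp.equiv_symm_apply, PiLp.toLp_apply]
    have heq : ‖L x‖ = ‖Lc z‖ := by
      rw [EuclideanSpace.norm_eq, EuclideanSpace.norm_eq]
      congr 1
      apply Finset.sum_congr rfl
      intro j _
      rw [hcomp j]
      simp [Complex.norm_real]
    calc ‖L x‖ = ‖Lc z‖ := heq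
      _ ≤ ‖Ac‖ * ‖z‖ := by rw [Matrix.l2_opNorm_def (A := Ac)]; exact Lc.le_opNorm z
      _ = ‖Ac‖ * ‖x‖ := by rw [hnz]
open Matrix Polynomial

variable {n : ℕ}

lemma root_mem_spectrum (Ac : Matrix (Fin n) (Fin n) ℂ) (μ : ℂ)
    (h : (Matrix.charpoly Ac).IsRoot μ) : μ ∈ spectrum ℂ Ac := by
  rw [spectrum.mem_iff]
  intro hu
  rw [Matrix.isUnit_iff_isUnit_det] at hu
  apply hu.ne_zero
  have : (Matrix.charpoly Ac).eval μ = (algebraMap ℂ (Matrix (Fin n) (Fin n) ℂ) μ - Ac).det := by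
    rw [Matrix.charpoly, ← Polynomial.coe_evalRingHom, RingHom.map_det]
    congr 1
    ext i j
    by_cases hij : i = j
    · subst hij
      simp [Matrix.charmatrix_apply_eq, Matrix.algebraMap_matrix_apply]
    · simp [Matrix.charmatrix_apply_ne _ _ _ hij, Matrix.algebraMap_matrix_apply, hij]
  rw [← this, h]

lemma exists_eig_list (Ac : Matrix (Fin n) (Fin n) ℂ) :
    ∃ lam : ℕ → ℂ,
      (∀ j, lam j ∈ spectrum ℂ Ac ∨ lam j = 0) ∧
      (List.map (fun l => Ac - lam l • 1) (List.range n)).prod = 0 := by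
  rcases Nat.eq_zero_or_pos n with hn | hn
  · subst hn
    exact ⟨fun _ => 0, fun j => Or.inr rfl, Subsingleton.elim _ _⟩
  have hdeg : (Matrix.charpoly Ac).natDegree = n := by
    rw [Matrix.charpoly_natDegree_eq_dim, Fintype.card_fin]
  have hcard : Multiset.card (Matrix.charpoly Ac).roots = n := by
    have := (Polynomial.splits_iff_card_roots).mp
      (IsAlgClosed.splits (Matrix.charpoly Ac))
    rw [hdeg] at this
    exact this
  set l : List ℂ := (Matrix.charpoly Ac).roots.toList with hl
  have hlen : l.length = n := by rw [hl, Multiset.length_toList, hcard]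
  refine ⟨fun j => l.getD j 0, fun j => ?_, ?_⟩
  · by_cases h : j < n
    · left
      apply root_mem_spectrum
      have hjl : j < l.length := by omega
      show Ac.charpoly.IsRoot (l.getD j 0)
      rw [List.getD_eq_getElem l 0 hjl]
      apply Polynomial.isRoot_of_mem_roots
      rw [← Multiset.mem_toList]
      exact List.getElem_mem hjl
    · right
      show l.getD j 0 = 0
      exact List.getD_eq_default l 0 (by omega)
  · have hprod : Matrix.charpoly Ac = (l.map fun a => X - C a).prod := by
      conv_lhs => rw [(Polynomial.prod_multiset_X_sub_C_of_monic_of_roots_card_eq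
        (Matrix.charpoly_monic Ac) (by rw [hdeg, hcard])).symm,
        ← Multiset.coe_toList (Matrix.charpoly Ac).roots]
      rw [Multiset.map_coe, Multiset.prod_coe]
    have hCH := Matrix.aeval_self_charpoly Ac
    rw [hprod, map_list_prod (Polynomial.aeval Ac), List.map_map] at hCH
    have heq : (List.map (fun j => Ac - (l.getD j 0) • 1) (List.range n))
        = List.map ((Polynomial.aeval Ac) ∘ fun a => X - C a) l := by
      apply List.ext_getElem
      · simp [hlen]
      · intro i h1 h2
        simp only [List.getElem_map, List.getElem_range, Function.comp_apply]
        rw [map_sub, Polynomial.aeval_X, Polynomial.aeval_C,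
          Algebra.algebraMap_eq_smul_one]
        have hi : i < l.length := by
          simp only [List.length_map, List.length_range] at h1
          omega
        rw [List.getD_eq_getElem l 0 hi]
    rw [heq, hCH]
open Matrix
open scoped Matrix.Norms.L2Operator

variable {n : ℕ}

/-- coefficients of `Ac^i` in the Newton basis -/
noncomputable def coefC (lam : ℕ → ℂ) : ℕ → ℕ → ℂ
  | 0, 0 => 1
  | 0, _+1 => 0
  | i+1, 0 => lam 0 * coefC lam i 0
  | i+1, j+1 => lam (j+1) * coefC lam i (j+1) + coefC lam i j

lemma coefC_bound (lam : ℕ → ℂ) (hlam : ∀ j, ‖lam j‖ ≤ 1) :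
    ∀ i j, ‖coefC lam i j‖ ≤ (i.choose j : ℝ) := by
  intro i
  induction i with
  | zero =>
    intro j
    cases j with
    | zero => simp [coefC]
    | succ j => simp [coefC]
  | succ i ih =>
    intro j
    cases j with
    | zero =>
      rw [coefC, norm_mul]
      calc ‖lam 0‖ * ‖coefC lam i 0‖ ≤ 1 * (i.choose 0 : ℝ) :=
        mul_le_mul (hlam 0) (ih 0) (norm_nonneg _) zero_le_one
      _ = ((i+1).choose 0 : ℝ) := by simp
    | succ j =>
      rw [coefC]
      calc ‖lam (j+1) * coefC lam i (j+1) + coefC lam i j‖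
          ≤ ‖lam (j+1)‖ * ‖coefC lam i (j+1)‖ + ‖coefC lam i j‖ := by
            refine (norm_add_le _ _).trans ?_
            rw [norm_mul]
        _ ≤ 1 * (i.choose (j+1) : ℝ) + (i.choose j : ℝ) :=
            add_le_add (mul_le_mul (hlam _) (ih _) (norm_nonneg _) zero_le_one) (ih _)
        _ = ((i+1).choose (j+1) : ℝ) := by
            rw [one_mul, Nat.choose_succ_succ]
            push_cast
            ring

section expansion

variable (Ac : Matrix (Fin n) (Fin n) ℂ) (lam : ℕ → ℂ)

/-- The Newton basis matrices -/
noncomputable def newtB (j : ℕ) : Matrix (Fin n) (Fin n) ℂ :=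
  ((List.range j).map (fun l => Ac - lam l • 1)).prod

lemma newtB_zero : newtB Ac lam 0 = 1 := by simp [newtB]

lemma newtB_succ (j : ℕ) :
    newtB Ac lam (j+1) = newtB Ac lam j * (Ac - lam j • 1) := by
  rw [newtB, newtB, List.range_succ, List.map_append, List.prod_append]
  simp

lemma commute_newtB (j : ℕ) : Commute Ac (newtB Ac lam j) := by
  apply Commute.list_prod_right
  intro x hx
  simp only [List.mem_map, List.mem_range] at hx
  obtain ⟨l, -, rfl⟩ := hx
  exact (Commute.refl Ac).sub_right (((Commute.one_right Ac).smul_right (lam l)))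

lemma mul_newtB (j : ℕ) :
    Ac * newtB Ac lam j = newtB Ac lam (j+1) + lam j • newtB Ac lam j := by
  rw [newtB_succ, (commute_newtB Ac lam j).eq]
  rw [mul_sub, Matrix.mul_smul, mul_one]
  abel

lemma expansion (hn : 0 < n)
    (hprod : (List.map (fun l => Ac - lam l • 1) (List.range n)).prod = 0) :
    ∀ i, Ac ^ i = ∑ j ∈ Finset.range n, coefC lam i j • newtB Ac lam j := by
  have hBn : newtB Ac lam n = 0 := hprod
  intro i
  induction i with
  | zero =>
    rw [pow_zero]
    rw [Finset.sum_eq_single 0]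
    · rw [coefC, newtB_zero, one_smul]
    · intro j _ hj
      match j, hj with
      | j+1, _ => rw [coefC]; simp
    · intro h
      exact absurd (Finset.mem_range.mpr hn) h
  | succ i ih =>
    rw [pow_succ']
    rw [ih, Finset.mul_sum]
    have step : ∀ j, Ac * (coefC lam i j • newtB Ac lam j)
        = coefC lam i j • newtB Ac lam (j+1) + (lam j * coefC lam i j) • newtB Ac lam j := by
      intro j
      rw [Matrix.mul_smul, mul_newtB, smul_add, mul_smul, smul_comm]
    simp_rw [step]
    rw [Finset.sum_add_distrib]
    -- handle the shifted sum
    have hshift : ∑ j ∈ Finset.range n, coefC lam i j • newtB Ac lam (j+1)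
        = ∑ j ∈ Finset.range n, (if j = 0 then 0 else coefC lam i (j-1)) • newtB Ac lam j := by
      have h1 : ∑ j ∈ Finset.range (n+1), (if j = 0 then 0 else coefC lam i (j-1)) • newtB Ac lam j
          = ∑ j ∈ Finset.range n, coefC lam i j • newtB Ac lam (j+1) := by
        rw [Finset.sum_range_succ']
        simp
      have h2 : ∑ j ∈ Finset.range (n+1), (if j = 0 then 0 else coefC lam i (j-1)) • newtB Ac lam j
          = ∑ j ∈ Finset.range n, (if j = 0 then 0 else coefC lam i (j-1)) • newtB Ac lam j := by
        rw [Finset.sum_range_succ, hBn, smul_zero, add_zero]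
      rw [← h1, h2]
    rw [hshift, ← Finset.sum_add_distrib]
    apply Finset.sum_congr rfl
    intro j _
    rw [← add_smul]
    congr 1
    cases j with
    | zero => rw [coefC]; simp
    | succ j => rw [coefC]; simp [add_comm]

end expansion

lemma newtB_norm_le (hn : 0 < n) (Ac : Matrix (Fin n) (Fin n) ℂ) (lam : ℕ → ℂ)
    (hlam : ∀ j, ‖lam j‖ ≤ 1) (j : ℕ) :
    ‖newtB Ac lam j‖ ≤ (‖Ac‖ + 1) ^ j := by
  haveI : Nonempty (Fin n) := ⟨⟨0, hn⟩⟩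
  induction j with
  | zero => rw [newtB_zero, norm_one]; norm_num
  | succ j ih =>
    rw [newtB_succ]
    calc ‖newtB Ac lam j * (Ac - lam j • 1)‖ ≤ ‖newtB Ac lam j‖ * ‖Ac - lam j • 1‖ :=
        Matrix.l2_opNorm_mul _ _
      _ ≤ (‖Ac‖ + 1)^j * (‖Ac‖ + 1) := by
          apply mul_le_mul ih ?_ (norm_nonneg _) (by positivity)
          calc ‖Ac - lam j • 1‖ ≤ ‖Ac‖ + ‖lam j • (1 : Matrix (Fin n) (Fin n) ℂ)‖ :=
              norm_sub_le _ _
            _ ≤ ‖Ac‖ + 1 := by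
                rw [norm_smul, norm_one, mul_one]
                exact add_le_add_right (hlam j) _
      _ = (‖Ac‖ + 1)^(j+1) := by ring

lemma pow_norm_le_sum_choose (hn : 0 < n) (Ac : Matrix (Fin n) (Fin n) ℂ) (lam : ℕ → ℂ)
    (hlam : ∀ j, ‖lam j‖ ≤ 1)
    (hprod : (List.map (fun l => Ac - lam l • 1) (List.range n)).prod = 0) (i : ℕ) :
    ‖Ac ^ i‖ ≤ ∑ j ∈ Finset.range n, (i.choose j : ℝ) * (‖Ac‖ + 1)^j := by
  rw [expansion Ac lam hn hprod i]
  refine (norm_sum_le _ _).trans ?_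
  apply Finset.sum_le_sum
  intro j _
  rw [norm_smul]
  exact mul_le_mul (coefC_bound lam hlam i j) (newtB_norm_le hn Ac lam hlam j)
    (norm_nonneg _) (Nat.cast_nonneg _)

lemma choose_sum_le (i d : ℕ) (hd : 1 ≤ d) (hid : d ≤ i) :
    (∑ j ∈ Finset.range (d+1), (i.choose j : ℝ)) ≤ (Real.exp 1 * i / d)^d := by
  have hi : 1 ≤ i := le_trans hd hid
  set t : ℝ := (d : ℝ) / i with ht
  have hipos : (0:ℝ) < i := by exact_mod_cast hi
  have hdpos : (0:ℝ) < d := by exact_mod_cast hd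
  have ht0 : 0 < t := by positivity
  have ht1 : t ≤ 1 := by
    rw [ht, div_le_one hipos]
    exact_mod_cast hid
  set S : ℝ := ∑ j ∈ Finset.range (d+1), (i.choose j : ℝ) with hS
  have key : S * t^d ≤ Real.exp 1 ^ d := by
    calc S * t^d = ∑ j ∈ Finset.range (d+1), (i.choose j : ℝ) * t^d := by
          rw [hS, Finset.sum_mul]
      _ ≤ ∑ j ∈ Finset.range (d+1), (i.choose j : ℝ) * t^j := by
          apply Finset.sum_le_sum
          intro j hj
          apply mul_le_mul_of_nonneg_left _ (Nat.cast_nonneg _)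
          exact pow_le_pow_of_le_one ht0.le ht1 (Finset.mem_range_succ_iff.mp hj)
      _ ≤ ∑ j ∈ Finset.range (i+1), (i.choose j : ℝ) * t^j := by
          apply Finset.sum_le_sum_of_subset_of_nonneg
          · exact Finset.range_subset_range.mpr (by omega)
          · intro j _ _
            positivity
      _ = (t + 1)^i := by
          rw [add_pow]
          apply Finset.sum_congr rfl
          intro j _
          rw [one_pow, mul_comm ((i.choose j : ℝ)) _, mul_one]
      _ ≤ (Real.exp t)^i := by
          apply pow_le_pow_left₀ (by positivity) (Real.add_one_le_exp t)
      _ = Real.exp 1 ^ d := by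
          rw [← Real.exp_nat_mul, ← Real.exp_nat_mul]
          congr 1
          field_simp [ht]
          rw [ht]
          field_simp
  have htd : 0 < t^d := by positivity
  rw [← le_div_iff₀ htd] at key
  refine key.trans (le_of_eq ?_)
  rw [ht, ← div_pow]
  congr 1
  field_simp

lemma key_ineq (n i : ℕ) (m : ℝ) (hm : 1 ≤ m) (hn : 1 ≤ n) (hi : n ≤ i) :
    ∑ j ∈ Finset.range n, (i.choose j : ℝ) * (2*m)^j
      ≤ (Real.exp 1 * i * m)^(n-1) := by
  have he : (2.7:ℝ) < Real.exp 1 := by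
    have := Real.exp_one_gt_d9
    norm_num at this ⊢
    linarith
  have hipos : (1:ℝ) ≤ i := by exact_mod_cast le_trans hn hi
  -- case n = 1
  match n, hn with
  | 1, _ =>
    simp only [Finset.range_one, Finset.sum_singleton, pow_zero, Nat.choose_zero_right]
    norm_num
  | 2, _ =>
    have hi2 : (2:ℝ) ≤ i := by exact_mod_cast hi
    rw [Finset.sum_range_succ, Finset.sum_range_one]
    simp only [Nat.choose_zero_right, Nat.choose_one_right, pow_zero, pow_one, Nat.cast_one]
    have h1 : (1:ℝ) ≤ ((2:ℝ) * m) * ((i:ℝ)/4) := by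
      nlinarith
    calc (1:ℝ) * 1 + (i:ℝ) * (2 * m) ≤ ((2:ℝ)*m) * ((i:ℝ)/4) + (i:ℝ)*(2*m) := by
          rw [one_mul]; exact add_le_add_left h1 _
      _ = 2.5 * (i:ℝ) * m := by ring
      _ ≤ (Real.exp 1 * i * m)^(2-1) := by
          rw [pow_one]
          nlinarith
  | (d+3), _ =>
    set D := d + 2 with hD
    have hD1 : 1 ≤ D := by omega
    have hsum : ∑ j ∈ Finset.range (D+1), (i.choose j : ℝ) * (2*m)^j
        ≤ (2*m)^D * ∑ j ∈ Finset.range (D+1), (i.choose j : ℝ) := by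
      rw [Finset.mul_sum]
      apply Finset.sum_le_sum
      intro j hj
      rw [mul_comm ((2*m)^D) _]
      apply mul_le_mul_of_nonneg_left _ (Nat.cast_nonneg _)
      apply pow_le_pow_right₀ (by linarith) (by simp at hj; omega)
    have hchoose := choose_sum_le i D hD1 (by omega)
    have hDpos : (0:ℝ) < D := by exact_mod_cast hD1
    have h2m : (0:ℝ) ≤ 2*m := by linarith
    calc ∑ j ∈ Finset.range (D+1), (i.choose j : ℝ) * (2*m)^j
        ≤ (2*m)^D * ((Real.exp 1 * i / D)^D) := by
          refine hsum.trans ?_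
          apply mul_le_mul_of_nonneg_left hchoose (by positivity)
      _ = ((2*m) * (Real.exp 1 * i / D))^D := by rw [← mul_pow]
      _ ≤ (Real.exp 1 * i * m)^D := by
          apply pow_le_pow_left₀ (by positivity)
          have hD2 : (2:ℝ) ≤ (D:ℝ) := by exact_mod_cast (by omega : 2 ≤ D)
          have heim : (0:ℝ) ≤ Real.exp 1 * (i:ℝ) * m := by positivity
          have hre : 2 * m * (Real.exp 1 * (i:ℝ) / (D:ℝ)) = (2/(D:ℝ)) * (Real.exp 1 * (i:ℝ) * m) := by
            field_simp
          rw [hre]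
          calc (2/(D:ℝ)) * (Real.exp 1 * (i:ℝ) * m) ≤ 1 * (Real.exp 1 * (i:ℝ) * m) := by
                apply mul_le_mul_of_nonneg_right _ heim
                rw [div_le_one hDpos]
                exact hD2
            _ = Real.exp 1 * (i:ℝ) * m := one_mul _
      _ = (Real.exp 1 * i * m)^((d+3)-1) := by norm_num [hD]



lemma specNorm_eq {m n : Type*} [Fintype m] [Fintype n] [DecidableEq n]
    (A : Matrix m n ℝ) : specNorm A = ‖A‖ := rfl

lemma matrix_map_pow {n : ℕ} (A : Matrix (Fin n) (Fin n) ℝ) (i : ℕ) :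
    (A ^ i).map (Complex.ofReal) = (A.map Complex.ofReal) ^ i := by
  have := map_pow (Complex.ofRealHom.mapMatrix (m := Fin n)) A i
  exact this

/-- The key power bound. -/
lemma specNorm_pow_le {n : ℕ} (hn : 0 < n) (A : Matrix (Fin n) (Fin n) ℝ) (M : ℝ)
    (hspec : ∀ μ ∈ spectrum ℂ (A.map (Complex.ofReal)), ‖μ‖ ≤ 1)
    (hA : specNorm A ≤ M) (i : ℕ) (hi : 1 ≤ i) :
    specNorm (A ^ i) ≤ (Real.exp 1 * i * max M 1) ^ (n - 1) := by
  set m := max M 1 with hm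
  have hm1 : (1:ℝ) ≤ m := le_max_right _ _
  have hMm : M ≤ m := le_max_left _ _
  have hM0 : 0 ≤ M := le_trans (by rw [specNorm_eq]; exact norm_nonneg A) hA
  have hAm : ‖A‖ ≤ m := le_trans hA hMm
  have he1 : (1:ℝ) ≤ Real.exp 1 := by nlinarith [Real.add_one_le_exp 1]
  have hi1 : (1:ℝ) ≤ (i:ℝ) := by exact_mod_cast hi
  have heim : (1:ℝ) ≤ Real.exp 1 * i := by nlinarith
  rcases lt_or_ge i n with hlt | hge
  · -- small powers: direct norm bound
    rw [specNorm_eq]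
    calc ‖A ^ i‖ ≤ ‖A‖ ^ i := norm_pow_le' A hi
      _ ≤ m ^ i := pow_le_pow_left₀ (norm_nonneg _) hAm i
      _ ≤ m ^ (n-1) := pow_le_pow_right₀ hm1 (by omega)
      _ ≤ (Real.exp 1 * i * m) ^ (n-1) := by
          apply pow_le_pow_left₀ (by linarith)
          nlinarith
  · -- large powers: use the Newton expansion
    set Ac := A.map (Complex.ofReal) with hAc
    obtain ⟨lam, hlamspec, hprod⟩ := exists_eig_list Ac
    have hlam : ∀ j, ‖lam j‖ ≤ 1 := by
      intro j
      rcases hlamspec j with h | h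
      · exact hspec _ h
      · rw [h]; simp
    have hnorm : specNorm (A ^ i) = ‖Ac ^ i‖ := by
      rw [specNorm_eq, ← l2_norm_map_ofReal (A ^ i), matrix_map_pow]
    have hAcn : ‖Ac‖ = ‖A‖ := l2_norm_map_ofReal A
    have h1 := pow_norm_le_sum_choose hn Ac lam hlam hprod i
    have h2 : ∑ j ∈ Finset.range n, (i.choose j : ℝ) * (‖Ac‖ + 1)^j
        ≤ ∑ j ∈ Finset.range n, (i.choose j : ℝ) * (2*m)^j := by
      apply Finset.sum_le_sum
      intro j _
      apply mul_le_mul_of_nonneg_left _ (Nat.cast_nonneg _)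
      apply pow_le_pow_left₀ (by positivity)
      rw [hAcn]
      linarith
    rw [hnorm]
    exact h1.trans (h2.trans (key_ineq n i m hm1 hn hge))


theorem gramian_upper_bound {n r : ℕ} (hr : r ≤ n)
    (A : Matrix (Fin n) (Fin n) ℝ) (H : Matrix (Fin n) (Fin r) ℝ) (M : ℝ)
    (hspec : ∀ μ ∈ spectrum ℂ (A.map (Complex.ofReal)), ‖μ‖ ≤ 1)
    (hA : specNorm A ≤ M) (hH : specNorm H ≤ M) (k : ℕ) :
    specNorm (gramian A H k) ≤
      Real.exp 1 ^ (2 * n - 2) * (k : ℝ) ^ (2 * n - 1) * max (M ^ (2 * n)) 1 := by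
  rcases Nat.eq_zero_or_pos n with hn | hn
  · subst hn
    have h0 : gramian A H k = 0 := Subsingleton.elim _ _
    rw [h0, specNorm_eq, norm_zero]
    have h1 : (1:ℝ) ≤ max (M ^ (2 * 0)) 1 := le_max_right _ _
    simp only [Nat.mul_zero, Nat.zero_sub, pow_zero, one_mul]
    positivity
  -- now n ≥ 1
  haveI : Nonempty (Fin n) := ⟨⟨0, hn⟩⟩
  set m := max M 1 with hm
  have hm1 : (1:ℝ) ≤ m := le_max_right _ _
  have hMm : M ≤ m := le_max_left _ _
  have hM0 : 0 ≤ M := le_trans (by rw [specNorm_eq]; exact norm_nonneg A) hA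
  have he1 : (1:ℝ) ≤ Real.exp 1 := by nlinarith [Real.add_one_le_exp 1]
  rcases Nat.eq_zero_or_pos k with hk | hkpos
  · subst hk
    have h0 : gramian A H 0 = 0 := by simp [gramian]
    rw [h0, specNorm_eq, norm_zero]
    positivity
  obtain ⟨k', rfl⟩ : ∃ k', k = k' + 1 := ⟨k - 1, by omega⟩
  -- termwise bound
  have hterm : ∀ i : ℕ, specNorm (A ^ i * H * Hᵀ * (Aᵀ) ^ i) ≤ (specNorm (A ^ i) * M)^2 := by
    intro i
    have htr : A ^ i * H * Hᵀ * (Aᵀ) ^ i = (A ^ i * H) * (A ^ i * H)ᵀ := by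
      rw [Matrix.transpose_mul, Matrix.transpose_pow, Matrix.mul_assoc]
    rw [htr, specNorm_eq]
    have hct : ((A ^ i * H)ᵀ : Matrix (Fin r) (Fin n) ℝ) = (A ^ i * H)ᴴ := by
      rw [Matrix.conjTranspose_eq_transpose_of_trivial]
    calc ‖(A ^ i * H) * (A ^ i * H)ᵀ‖ ≤ ‖A ^ i * H‖ * ‖(A ^ i * H)ᵀ‖ :=
        Matrix.l2_opNorm_mul _ _
      _ = ‖A ^ i * H‖ * ‖A ^ i * H‖ := by rw [hct, Matrix.l2_opNorm_conjTranspose]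
      _ ≤ (specNorm (A ^ i) * M) * (specNorm (A ^ i) * M) := by
          have hHM : ‖H‖ ≤ M := by rw [← specNorm_eq]; exact hH
          have hnn' : (0:ℝ) ≤ specNorm (A ^ i) := by
            rw [specNorm_eq]; exact norm_nonneg _
          have h1 : ‖A ^ i * H‖ ≤ specNorm (A ^ i) * M := by
            calc ‖A ^ i * H‖ ≤ ‖A ^ i‖ * ‖H‖ := Matrix.l2_opNorm_mul _ _
              _ ≤ specNorm (A ^ i) * M := by
                  rw [specNorm_eq]
                  exact mul_le_mul_of_nonneg_left hHM (norm_nonneg _)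
          exact mul_le_mul h1 h1 (norm_nonneg _) (mul_nonneg hnn' hM0)
      _ = (specNorm (A ^ i) * M)^2 := (sq _).symm
  -- norm of sum
  have hsum : specNorm (gramian A H (k'+1)) ≤
      ∑ i ∈ Finset.range (k'+1), (specNorm (A ^ i) * M)^2 := by
    rw [gramian, specNorm_eq]
    refine (norm_sum_le _ _).trans ?_
    apply Finset.sum_le_sum
    intro i _
    exact (hterm i).trans_eq' (specNorm_eq _)
  -- individual powers
  have hpow0 : specNorm (A ^ 0) = 1 := by
    rw [pow_zero, specNorm_eq]
    exact norm_one
  have hpowi : ∀ i, 1 ≤ i → i ≤ k' → (specNorm (A ^ i) * M)^2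
      ≤ Real.exp 1 ^ (2*n-2) * m^(2*n-2) * M^2 * (k':ℝ)^(2*n-2) := by
    intro i h1 h2
    have hb := specNorm_pow_le hn A M hspec hA i h1
    have hnn : 0 ≤ specNorm (A ^ i) := by rw [specNorm_eq]; exact norm_nonneg _
    have hki : (i:ℝ) ≤ (k':ℝ) := by exact_mod_cast h2
    have hi1 : (1:ℝ) ≤ (i:ℝ) := by exact_mod_cast h1
    have hstep : specNorm (A ^ i) ≤ (Real.exp 1 * k' * m)^(n-1) := by
      refine hb.trans ?_
      have hle : Real.exp 1 * i * m ≤ Real.exp 1 * k' * m :=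
        mul_le_mul_of_nonneg_right (mul_le_mul_of_nonneg_left hki (by linarith)) (by linarith)
      exact pow_le_pow_left₀
        (mul_nonneg (mul_nonneg (by linarith) (by linarith)) (by linarith)) hle _
    calc (specNorm (A ^ i) * M)^2 ≤ ((Real.exp 1 * k' * m)^(n-1) * M)^2 := by
          apply pow_le_pow_left₀ (by positivity)
          exact mul_le_mul_of_nonneg_right hstep hM0
      _ = Real.exp 1 ^ (2*n-2) * m^(2*n-2) * M^2 * (k':ℝ)^(2*n-2) := by
          have hnm : (n-1)*2 = 2*n-2 := by omega
          calc ((Real.exp 1 * k' * m)^(n-1) * M)^2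
              = (Real.exp 1 * k' * m)^((n-1)*2) * M^2 := by rw [mul_pow, ← pow_mul]
            _ = (Real.exp 1 * k' * m)^(2*n-2) * M^2 := by rw [hnm]
            _ = Real.exp 1 ^ (2*n-2) * m^(2*n-2) * M^2 * (k':ℝ)^(2*n-2) := by
                rw [mul_pow, mul_pow]
                ring
  -- sum it up
  have hsplit : ∑ i ∈ Finset.range (k'+1), (specNorm (A ^ i) * M)^2
      = (specNorm (A ^ 0) * M)^2 + ∑ i ∈ Finset.range k', (specNorm (A ^ (i+1)) * M)^2 := by
    rw [Finset.sum_range_succ']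
    ring
  have hbound : ∑ i ∈ Finset.range (k'+1), (specNorm (A ^ i) * M)^2
      ≤ Real.exp 1 ^ (2*n-2) * m^(2*n-2) * M^2 * (1 + (k':ℝ)^(2*n-1)) := by
    rw [hsplit, hpow0, one_mul]
    have h1 : M^2 ≤ Real.exp 1 ^ (2*n-2) * m^(2*n-2) * M^2 * 1 := by
      rw [mul_one]
      have ha : (1:ℝ) ≤ Real.exp 1 ^ (2*n-2) := one_le_pow₀ he1
      have hb : (1:ℝ) ≤ m^(2*n-2) := one_le_pow₀ hm1
      have hab : (1:ℝ) ≤ Real.exp 1 ^ (2*n-2) * m^(2*n-2) := by nlinarith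
      nlinarith [mul_le_mul_of_nonneg_right hab (sq_nonneg M)]
    have h2 : ∑ i ∈ Finset.range k', (specNorm (A ^ (i+1)) * M)^2
        ≤ Real.exp 1 ^ (2*n-2) * m^(2*n-2) * M^2 * (k':ℝ)^(2*n-1) := by
      calc ∑ i ∈ Finset.range k', (specNorm (A ^ (i+1)) * M)^2
          ≤ ∑ _i ∈ Finset.range k', Real.exp 1 ^ (2*n-2) * m^(2*n-2) * M^2 * (k':ℝ)^(2*n-2) := by
            apply Finset.sum_le_sum
            intro i hi
            exact hpowi (i+1) (by omega) (by simpa using Finset.mem_range.mp hi)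
        _ = (k':ℝ) * (Real.exp 1 ^ (2*n-2) * m^(2*n-2) * M^2 * (k':ℝ)^(2*n-2)) := by
            rw [Finset.sum_const, Finset.card_range, nsmul_eq_mul]
        _ = Real.exp 1 ^ (2*n-2) * m^(2*n-2) * M^2 * (k':ℝ)^(2*n-1) := by
            have : (k':ℝ) ^ (2*n-1) = (k':ℝ) * (k':ℝ)^(2*n-2) := by
              rw [← pow_succ']
              congr 1
              omega
            rw [this]
            ring
    calc _ ≤ Real.exp 1 ^ (2*n-2) * m^(2*n-2) * M^2 * 1
          + Real.exp 1 ^ (2*n-2) * m^(2*n-2) * M^2 * (k':ℝ)^(2*n-1) := add_le_add h1 h2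
      _ = _ := by ring
  -- final arithmetic
  have hkk : 1 + (k':ℝ)^(2*n-1) ≤ ((k'+1:ℕ):ℝ)^(2*n-1) := by
    have hd : 2*n-1 ≠ 0 := by omega
    have : k'^(2*n-1) + 1 ≤ (k'+1)^(2*n-1) :=
      Nat.succ_le_of_lt (Nat.pow_lt_pow_left (Nat.lt_succ_self k') hd)
    calc 1 + (k':ℝ)^(2*n-1) = ((k'^(2*n-1) + 1 : ℕ) : ℝ) := by push_cast; ring
      _ ≤ ((k'+1)^(2*n-1) : ℕ) := by exact_mod_cast this
      _ = _ := by push_cast; ring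
  have hmM : m^(2*n-2) * M^2 ≤ max (M ^ (2*n)) 1 := by
    rcases le_or_gt M 1 with h | h
    · have hmm : m = 1 := max_eq_right h
      rw [hmm, one_pow, one_mul]
      calc M^2 ≤ 1 := pow_le_one₀ hM0 h
        _ ≤ max (M ^ (2*n)) 1 := le_max_right _ _
    · have hmm : m = M := max_eq_left h.le
      rw [hmm, ← pow_add]
      have : 2*n-2+2 = 2*n := by omega
      rw [this]
      exact le_max_left _ _
  refine (hsum.trans hbound).trans ?_
  calc Real.exp 1 ^ (2*n-2) * m^(2*n-2) * M^2 * (1 + (k':ℝ)^(2*n-1))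
      ≤ Real.exp 1 ^ (2*n-2) * m^(2*n-2) * M^2 * ((k'+1:ℕ):ℝ)^(2*n-1) := by
        apply mul_le_mul_of_nonneg_left hkk
        positivity
    _ = Real.exp 1 ^ (2*n-2) * ((k'+1:ℕ):ℝ)^(2*n-1) * (m^(2*n-2) * M^2) := by ring
    _ ≤ Real.exp 1 ^ (2*n-2) * ((k'+1:ℕ):ℝ)^(2*n-1) * max (M ^ (2*n)) 1 := by
        apply mul_le_mul_of_nonneg_left hmM
        positivity
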